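/- In the Mixed Logit setting — J ≥ 1, K ≥ 1, θ ∈ ℝ^J with θ₀ = 0, choice probabilities f(j,x,α) = exp(θ_j + ⟨x_j,α⟩)/(1 + Σ_{k=1}^J exp(θ_k + ⟨x_k,α⟩)) for j ∈ {1,…,J} and f(0,x,α) the outside-good probability, and ν a finite measure on (ℝ^K)^J — let N ⊆ ℝ^K be open, α₀ ∈ N, and let η₀ be a measure on ℝ^K with η₀(U) > 0 for every nonempty open U ⊆ N. Then there is no pair (s, c) of a function s : {0,…,J} × (ℝ^K)^J → ℝ with ∫|s(j,x)| dν(x) < ∞ for each j and a constant c ∈ ℝ such that Σ_{j=0}^{J} ∫ f(j,x,α) s(j,x) dν(x) = 1(α ≤ α₀) − c for η₀-a.e. α ∈ N, where α ≤ α₀ means componentwise inequality. -/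

import Mathlib

open MeasureTheory Set
open scoped RealInnerProductSpace BigOperators

/-- Mixed Logit choice probabilities with `J` inside goods (intercepts `θ`, with the
outside-good intercept normalized to `0`). -/
noncomputable def logitProb {J K : ℕ} (θ : Fin J → ℝ)
    (x : Fin J → EuclideanSpace ℝ (Fin K)) (α : EuclideanSpace ℝ (Fin K)) :
    Fin (J + 1) → ℝ :=
  Fin.cases
    (1 / (1 + ∑ k : Fin J, Real.exp (θ k + ⟪x k, α⟫)))
    (fun j => Real.exp (θ j + ⟪x j, α⟫) / (1 + ∑ k : Fin J, Real.exp (θ k + ⟪x k, α⟫)))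

lemma denom_pos {J K : ℕ} (θ : Fin J → ℝ) (x : Fin J → EuclideanSpace ℝ (Fin K))
    (α : EuclideanSpace ℝ (Fin K)) :
    0 < 1 + ∑ k : Fin J, Real.exp (θ k + ⟪x k, α⟫) := by
  positivity

lemma logitProb_nonneg {J K : ℕ} (θ : Fin J → ℝ) (x : Fin J → EuclideanSpace ℝ (Fin K))
    (α : EuclideanSpace ℝ (Fin K)) (j : Fin (J+1)) : 0 ≤ logitProb θ x α j := by
  induction j using Fin.cases with
  | zero => simp only [logitProb, Fin.cases_zero]; positivity
  | succ j => simp only [logitProb, Fin.cases_succ]; positivity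

lemma logitProb_le_one {J K : ℕ} (θ : Fin J → ℝ) (x : Fin J → EuclideanSpace ℝ (Fin K))
    (α : EuclideanSpace ℝ (Fin K)) (j : Fin (J+1)) : logitProb θ x α j ≤ 1 := by
  have hD := denom_pos θ x α
  induction j using Fin.cases with
  | zero =>
    simp only [logitProb, Fin.cases_zero]
    rw [div_le_one hD]
    have : 0 ≤ ∑ k : Fin J, Real.exp (θ k + ⟪x k, α⟫) :=
      Finset.sum_nonneg fun k _ => (Real.exp_pos _).le
    linarith
  | succ j =>
    simp only [logitProb, Fin.cases_succ]
    rw [div_le_one hD]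
    have h1 : Real.exp (θ j + ⟪x j, α⟫) ≤ ∑ k : Fin J, Real.exp (θ k + ⟪x k, α⟫) :=
      Finset.single_le_sum (f := fun k => Real.exp (θ k + ⟪x k, α⟫))
        (fun k _ => (Real.exp_pos _).le) (Finset.mem_univ j)
    linarith

lemma continuous_logitProb_x {J K : ℕ} (θ : Fin J → ℝ) (α : EuclideanSpace ℝ (Fin K))
    (j : Fin (J+1)) : Continuous fun x : Fin J → EuclideanSpace ℝ (Fin K) => logitProb θ x α j := by
  have hden : Continuous fun x : Fin J → EuclideanSpace ℝ (Fin K) =>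
      1 + ∑ k : Fin J, Real.exp (θ k + ⟪x k, α⟫) :=
    continuous_const.add (continuous_finset_sum _ fun k _ =>
      Real.continuous_exp.comp (continuous_const.add ((continuous_apply k).inner continuous_const)))
  induction j using Fin.cases with
  | zero =>
    simp only [logitProb, Fin.cases_zero]
    exact continuous_const.div hden fun x => (denom_pos θ x α).ne'
  | succ j =>
    simp only [logitProb, Fin.cases_succ]
    exact (Real.continuous_exp.comp (continuous_const.add ((continuous_apply j).inner
      continuous_const))).div hden fun x => (denom_pos θ x α).ne'

lemma continuous_logitProb_α {J K : ℕ} (θ : Fin J → ℝ) (x : Fin J → EuclideanSpace ℝ (Fin K))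
    (j : Fin (J+1)) : Continuous fun α : EuclideanSpace ℝ (Fin K) => logitProb θ x α j := by
  have hden : Continuous fun α : EuclideanSpace ℝ (Fin K) =>
      1 + ∑ k : Fin J, Real.exp (θ k + ⟪x k, α⟫) :=
    continuous_const.add (continuous_finset_sum _ fun k _ =>
      Real.continuous_exp.comp (continuous_const.add (continuous_const.inner continuous_id)))
  induction j using Fin.cases with
  | zero =>
    simp only [logitProb, Fin.cases_zero]
    exact continuous_const.div hden fun α => (denom_pos θ x α).ne'
  | succ j =>
    simp only [logitProb, Fin.cases_succ]
    exact (Real.continuous_exp.comp (continuous_const.add (continuous_const.inner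
      continuous_id))).div hden fun α => (denom_pos θ x α).ne'

/-- irregular identification of the CDF of the random coefficient
distribution in the Mixed Logit model: the necessary representation
`Σ_{j=0}^J ∫ f(j,x,α)s(j,x)dν(x) = 1(α ≤ α₀) − c` (η₀-a.e. on `N`) is impossible. -/
theorem stmt_13 {J K : ℕ} (hJ : 1 ≤ J) (hK : 1 ≤ K) (θ : Fin J → ℝ)
    (ν : Measure (Fin J → EuclideanSpace ℝ (Fin K))) [IsFiniteMeasure ν]
    (N : Set (EuclideanSpace ℝ (Fin K))) (hN : IsOpen N)
    (α₀ : EuclideanSpace ℝ (Fin K)) (hα₀ : α₀ ∈ N)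
    (η₀ : Measure (EuclideanSpace ℝ (Fin K)))
    (hη : ∀ U : Set (EuclideanSpace ℝ (Fin K)), IsOpen U → U.Nonempty → U ⊆ N → 0 < η₀ U) :
    ¬ ∃ (s : Fin (J + 1) → (Fin J → EuclideanSpace ℝ (Fin K)) → ℝ) (c : ℝ),
      (∀ j, Integrable (s j) ν) ∧
      ∀ᵐ α ∂η₀, α ∈ N →
        (∑ j : Fin (J + 1), ∫ x, logitProb θ x α j * s j x ∂ν) =
          (if ∀ i, α i ≤ α₀ i then (1 : ℝ) else 0) - c := by
  rintro ⟨s, c, hint, hae⟩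
  set F : EuclideanSpace ℝ (Fin K) → ℝ :=
    fun α => ∑ j : Fin (J+1), ∫ x, logitProb θ x α j * s j x ∂ν with hFdef
  -- continuity of F at α₀
  have hterm : ∀ j : Fin (J+1),
      ContinuousAt (fun α : EuclideanSpace ℝ (Fin K) => ∫ x, logitProb θ x α j * s j x ∂ν) α₀ := by
    intro j
    apply continuousAt_of_dominated (bound := fun x => |s j x|)
    · filter_upwards with α
      exact ((continuous_logitProb_x θ α j).aestronglyMeasurable).mul (hint j).1
    · filter_upwards with α
      filter_upwards with x
      rw [norm_mul, Real.norm_eq_abs, Real.norm_eq_abs,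
        abs_of_nonneg (logitProb_nonneg θ x α j)]
      calc logitProb θ x α j * |s j x| ≤ 1 * |s j x| :=
            mul_le_mul_of_nonneg_right (logitProb_le_one θ x α j) (abs_nonneg _)
        _ = |s j x| := one_mul _
    · exact (hint j).abs
    · filter_upwards with x
      exact ((continuous_logitProb_α θ x j).continuousAt).mul continuousAt_const
  have hFc : ContinuousAt F α₀ := by
    apply tendsto_finset_sum
    intro j _
    exact hterm j
  -- the a.e. set is "dense" in N
  set T : Set (EuclideanSpace ℝ (Fin K)) :=
    {α | α ∈ N → F α = (if ∀ i, α i ≤ α₀ i then (1 : ℝ) else 0) - c} with hTdef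
  have hT0 : η₀ Tᶜ = 0 := by
    rw [hTdef, Set.compl_setOf]
    exact ae_iff.mp hae
  have hTeq : ∀ α ∈ T, α ∈ N → F α = (if ∀ i, α i ≤ α₀ i then (1 : ℝ) else 0) - c :=
    fun α hα => hα
  have hmeet : ∀ U : Set (EuclideanSpace ℝ (Fin K)), IsOpen U → U.Nonempty → U ⊆ N →
      (U ∩ T).Nonempty := by
    intro U hUo hUne hUN
    by_contra h
    rw [Set.not_nonempty_iff_eq_empty] at h
    have hsub : U ⊆ Tᶜ := fun a ha => fun haT => by
      have : a ∈ U ∩ T := ⟨ha, haT⟩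
      simp [h] at this
    exact absurd (le_antisymm (le_trans (measure_mono hsub) hT0.le) zero_le)
      (hη U hUo hUne hUN).ne'
  -- balls
  obtain ⟨ε, hε, hball⟩ := Metric.isOpen_iff.mp hN α₀ hα₀
  obtain ⟨δ, hδ, hδc⟩ := Metric.continuousAt_iff.mp hFc (1/2) (by norm_num)
  set r := min ε δ with hr
  have hrp : 0 < r := lt_min hε hδ
  set v : EuclideanSpace ℝ (Fin K) := WithLp.toLp 2 (fun _ => 1) with hv
  have hkey : ∀ sgn : ℝ, ∃ t : ℝ, 0 < t ∧ α₀ + (sgn * t) • v ∈ Metric.ball α₀ r := by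
    intro sgn
    have hvline : ContinuousAt (fun t : ℝ => α₀ + (sgn * t) • v) 0 :=
      continuousAt_const.add (((continuous_const.mul continuous_id).smul
        continuous_const).continuousAt)
    have hmem : (fun t : ℝ => α₀ + (sgn * t) • v) ⁻¹' Metric.ball α₀ r ∈ nhds (0 : ℝ) := by
      apply hvline.preimage_mem_nhds
      simp only [mul_zero, zero_smul, add_zero]
      exact Metric.ball_mem_nhds _ hrp
    obtain ⟨δ', hδ', hsub⟩ := Metric.mem_nhds_iff.mp hmem
    refine ⟨δ'/2, by linarith, hsub ?_⟩
    have : dist (δ'/2) (0:ℝ) < δ' := by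
      rw [Real.dist_eq, sub_zero, abs_of_pos (by linarith)]
      linarith
    exact this
  obtain ⟨t₁, ht₁, hmem₁⟩ := hkey (-1)
  obtain ⟨t₂, ht₂, hmem₂⟩ := hkey 1
  -- open sets
  set i₀ : Fin K := ⟨0, hK⟩ with hi₀
  set U₁ : Set (EuclideanSpace ℝ (Fin K)) :=
    Metric.ball α₀ r ∩ {α | ∀ i, α i < α₀ i} with hU₁
  set U₂ : Set (EuclideanSpace ℝ (Fin K)) :=
    Metric.ball α₀ r ∩ {α | α₀ i₀ < α i₀} with hU₂
  have hballN : Metric.ball α₀ r ⊆ N :=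
    fun a ha => hball (Metric.ball_subset_ball (min_le_left _ _) ha)
  have hlt_open : IsOpen {α : EuclideanSpace ℝ (Fin K) | ∀ i, α i < α₀ i} := by
    rw [Set.setOf_forall]
    exact isOpen_iInter_of_finite fun i => isOpen_lt (EuclideanSpace.proj (𝕜 := ℝ) i).continuous continuous_const
  have hU₁o : IsOpen U₁ := Metric.isOpen_ball.inter hlt_open
  have hU₂o : IsOpen U₂ := Metric.isOpen_ball.inter
    (isOpen_lt continuous_const (EuclideanSpace.proj (𝕜 := ℝ) i₀).continuous)
  have happly : ∀ (w : ℝ) (i : Fin K), (α₀ + w • v) i = α₀ i + w := by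
    intro w i
    simp [hv, PiLp.add_apply, PiLp.smul_apply]
  have hU₁ne : U₁.Nonempty := by
    refine ⟨α₀ + ((-1) * t₁) • v, hmem₁, fun i => ?_⟩
    rw [happly]
    linarith
  have hU₂ne : U₂.Nonempty := by
    refine ⟨α₀ + (1 * t₂) • v, hmem₂, ?_⟩
    show α₀ i₀ < _
    rw [happly]
    linarith
  obtain ⟨a₁, ha₁U, ha₁T⟩ := hmeet U₁ hU₁o hU₁ne (fun a ha => hballN ha.1)
  obtain ⟨a₂, ha₂U, ha₂T⟩ := hmeet U₂ hU₂o hU₂ne (fun a ha => hballN ha.1)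
  have hFa₁ : F a₁ = 1 - c := by
    have := hTeq a₁ ha₁T (hballN ha₁U.1)
    rwa [if_pos (fun i => (ha₁U.2 i).le)] at this
  have hFa₂ : F a₂ = 0 - c := by
    have := hTeq a₂ ha₂T (hballN ha₂U.1)
    rwa [if_neg (fun h => absurd (h i₀) (not_le.mpr ha₂U.2))] at this
  have hd₁ : dist (F a₁) (F α₀) < 1/2 :=
    hδc (lt_of_lt_of_le (Metric.mem_ball.mp ha₁U.1) (min_le_right _ _))
  have hd₂ : dist (F a₂) (F α₀) < 1/2 :=
    hδc (lt_of_lt_of_le (Metric.mem_ball.mp ha₂U.1) (min_le_right _ _))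
  have htri : dist (F a₁) (F a₂) < 1 := by
    calc dist (F a₁) (F a₂) ≤ dist (F a₁) (F α₀) + dist (F α₀) (F a₂) := dist_triangle _ _ _
      _ < 1/2 + 1/2 := by rw [dist_comm (F α₀)]; exact add_lt_add hd₁ hd₂
      _ = 1 := by norm_num
  rw [hFa₁, hFa₂, Real.dist_eq, show (1 - c) - (0 - c) = (1:ℝ) by ring] at htri
  norm_num at htri
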